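/- Let (G,κ) be a capacitated graph with κ(x) ≤ d_G(x) for all x, and define X = {x : κ(x) = d_G(x)}, Y = N(X) \ X, Z = V(G) \ (X ∪ Y). If X ∪ Z is not an independent set in G, then (G,κ) has two DP-Nash subgraphs with distinct D-sets. -/

import Mathlib

open Finset
open scoped Classical

noncomputable section

variable {V : Type*} [Fintype V]

/-- Degree of a vertex in a (simple) graph on a finite vertex set. -/
def deg (H : SimpleGraph V) (x : V) : ℕ :=
  (Finset.univ.filter fun y => H.Adj x y).card

/-- `(D, P; H)` is a DP-Nash subgraph of the capacitated graph `(G, κ)`: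
`H` is a spanning subgraph of `G`, bipartite with partite sets `D` and `P`,
no vertex of `P` is isolated in `H`, and every `x ∈ D` has
`H`-degree `min (d_G x) (κ x)`. -/
def IsDPNash (G : SimpleGraph V) (κ : V → ℕ) (D P : Finset V) (H : SimpleGraph V) : Prop :=
  H ≤ G ∧ D ∪ P = Finset.univ ∧ Disjoint D P ∧
    (∀ ⦃u v⦄, H.Adj u v → (u ∈ D ∧ v ∈ P) ∨ (u ∈ P ∧ v ∈ D)) ∧
    (∀ v ∈ P, 0 < deg H v) ∧
    (∀ x ∈ D, deg H x = min (deg G x) (κ x))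

/-- `X = {x : κ(x) = d_G(x)}`. -/
def XX (G : SimpleGraph V) (κ : V → ℕ) : Finset V :=
  Finset.univ.filter fun x => κ x = deg G x

/-- `Y = N(X) \ X`. -/
def YY (G : SimpleGraph V) (κ : V → ℕ) : Finset V :=
  Finset.univ.filter fun y => y ∉ XX G κ ∧ ∃ x ∈ XX G κ, G.Adj x y

/-- `Z = V \ (X ∪ Y)`. -/
def ZZ (G : SimpleGraph V) (κ : V → ℕ) : Finset V :=
  Finset.univ \ (XX G κ ∪ YY G κ)

/-- `Y^{κ>0} = {y ∈ Y : κ(y) > 0}`. -/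
def Ypos (G : SimpleGraph V) (κ : V → ℕ) : Finset V :=
  (YY G κ).filter fun y => 0 < κ y

/-- The neighbours of `x` in `G` lying in `W`. -/
def nbrW (G : SimpleGraph V) (x : V) (W : Finset V) : Finset V :=
  Finset.univ.filter fun y => G.Adj x y ∧ y ∈ W

/-- `L(W) = {x ∈ X ∪ Z : |N_G(x) ∩ W| > d_G(x) - κ(x)}`. -/
def LL (G : SimpleGraph V) (κ : V → ℕ) (W : Finset V) : Finset V :=
  (XX G κ ∪ ZZ G κ).filter fun x => deg G x - κ x < (nbrW G x W).card

set_option linter.unusedSectionVars false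


def IsDPNashC (G : SimpleGraph V) (κ : V → ℕ) (C : Finset V) (D P : Finset V)
    (H : SimpleGraph V) : Prop :=
  H ≤ G ∧ D ∪ P = Finset.univ ∧ Disjoint D P ∧
    (∀ ⦃u v⦄, H.Adj u v → (u ∈ D ∧ v ∈ P) ∨ (u ∈ P ∧ v ∈ D)) ∧
    (∀ v ∈ P, v ∉ C → 0 < deg H v) ∧
    (∀ x ∈ D, deg H x = min (deg G x) (κ x))

lemma deg_pos_of_adj {H : SimpleGraph V} {x y : V} (h : H.Adj x y) : 0 < deg H x :=
  Finset.card_pos.mpr ⟨y, Finset.mem_filter.mpr ⟨Finset.mem_univ _, h⟩⟩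

lemma deg_le_of_le {G G' : SimpleGraph V} (h : ∀ a b, G'.Adj a b → G.Adj a b) (x : V) :
    deg G' x ≤ deg G x := by
  apply Finset.card_le_card
  intro y hy
  rw [Finset.mem_filter] at hy ⊢
  exact ⟨hy.1, h _ _ hy.2⟩

lemma le_of_adj_imp {G G' : SimpleGraph V} (h : ∀ a b, G'.Adj a b → G.Adj a b) : G' ≤ G :=
  fun _ _ hab => h _ _ hab

lemma dpnTransfer {G G' : SimpleGraph V} {κ : V → ℕ} {C D P : Finset V} {H : SimpleGraph V}
    (hle : ∀ a b, G'.Adj a b → G.Adj a b) (hκ' : ∀ x, κ x ≤ deg G' x)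
    (h : IsDPNashC G' κ C D P H) : IsDPNashC G κ C D P H := by
  obtain ⟨h1, h2, h3, h4, h5, h6⟩ := h
  refine ⟨le_trans h1 (le_of_adj_imp hle), h2, h3, h4, h5, fun x hx => ?_⟩
  have := h6 x hx
  have e1 : min (deg G' x) (κ x) = κ x := min_eq_right (hκ' x)
  have e2 : min (deg G x) (κ x) = κ x := min_eq_right (le_trans (hκ' x) (deg_le_of_le hle x))
  rw [this, e1, e2]

def dpnM (G : SimpleGraph V) : ℕ := (Finset.univ.filter fun p : V × V => G.Adj p.1 p.2).card

lemma dpnM_lt {G G' : SimpleGraph V} (hle : ∀ a b, G'.Adj a b → G.Adj a b)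
    {x y : V} (hxy : G.Adj x y) (hxy' : ¬ G'.Adj x y) : dpnM G' < dpnM G := by
  apply Finset.card_lt_card
  rw [Finset.ssubset_iff_of_subset]
  · exact ⟨(x, y), Finset.mem_filter.mpr ⟨Finset.mem_univ _, hxy⟩,
      fun hc => hxy' (Finset.mem_filter.mp hc).2⟩
  · intro p hp
    rw [Finset.mem_filter] at hp ⊢
    exact ⟨hp.1, hle _ _ hp.2⟩

/-! ### The star-reduction ("dpnMassage") step -/

def NB (G : SimpleGraph V) (v₀ : V) : Finset V :=
  insert v₀ (Finset.univ.filter (G.Adj v₀))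

lemma mem_NB {G : SimpleGraph V} {v₀ y : V} : y ∈ NB G v₀ ↔ y = v₀ ∨ G.Adj v₀ y := by
  simp [NB]

def Gm (G : SimpleGraph V) (v₀ : V) : SimpleGraph V where
  Adj a b := G.Adj a b ∧ a ∉ NB G v₀ ∧ b ∉ NB G v₀
  symm := by constructor; intro a b h; exact ⟨h.1.symm, h.2.2, h.2.1⟩
  loopless := by constructor; intro a h; exact G.loopless.irrefl a h.1

def κm (G : SimpleGraph V) (κ : V → ℕ) (v₀ : V) : V → ℕ :=
  fun z => min (κ z) (deg (Gm G v₀) z)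

lemma Gm_le (G : SimpleGraph V) (v₀ : V) : ∀ a b, (Gm G v₀).Adj a b → G.Adj a b :=
  fun _ _ h => h.1

def Am (G : SimpleGraph V) (v₀ z : V) : Finset V :=
  Finset.univ.filter fun y => G.Adj z y ∧ y ∈ NB G v₀

/-- degree split for `z ∉ NB`. -/
lemma deg_split (G : SimpleGraph V) (v₀ : V) {z : V} (hz : z ∉ NB G v₀) :
    deg G z = deg (Gm G v₀) z + (Am G v₀ z).card := by
  rw [Am]
  have h1 : (Finset.univ.filter fun y => (Gm G v₀).Adj z y)
      = Finset.univ.filter fun y => G.Adj z y ∧ y ∉ NB G v₀ := by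
    apply Finset.filter_congr
    intro y _
    constructor
    · intro h; exact ⟨h.1, h.2.2⟩
    · intro h; exact ⟨h.1, hz, h.2⟩
  have h2 : (Finset.univ.filter fun y => G.Adj z y ∧ y ∉ NB G v₀)
      ∪ (Finset.univ.filter fun y => G.Adj z y ∧ y ∈ NB G v₀)
      = Finset.univ.filter fun y => G.Adj z y := by
    ext y
    simp only [Finset.mem_union, Finset.mem_filter, Finset.mem_univ, true_and]
    tauto
  have h3 : Disjoint (Finset.univ.filter fun y => G.Adj z y ∧ y ∉ NB G v₀)
      (Finset.univ.filter fun y => G.Adj z y ∧ y ∈ NB G v₀) := by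
    rw [Finset.disjoint_left]
    intro y hy hy'
    rw [Finset.mem_filter] at hy hy'
    exact hy.2.2 hy'.2.2
  rw [deg, ← h2, Finset.card_union_of_disjoint h3, deg, h1]

lemma dpnMassage (G : SimpleGraph V) (κ : V → ℕ) (v₀ : V) (C : Finset V)
    (hκ : ∀ x, κ x ≤ deg G x) (hv : κ v₀ = deg G v₀)
    (hsub : ∃ D P H, IsDPNashC (Gm G v₀) (κm G κ v₀) (C ∪ NB G v₀) D P H) :
    ∃ D P H, IsDPNashC G κ C D P H ∧ v₀ ∈ D ∧ ∀ y, G.Adj v₀ y → y ∉ D := by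
  obtain ⟨D', P', H', hH1, hH2, hH3, hH4, hH5, hH6⟩ := hsub
  -- top-up sets
  have hchoice : ∀ z : V, ∃ t : Finset V, t ⊆ Am G v₀ z ∧
      ((z ∈ D' ∧ z ∉ NB G v₀) → t.card = κ z - κm G κ v₀ z) := by
    intro z
    by_cases hz : z ∈ D' ∧ z ∉ NB G v₀
    · have hsplit := deg_split G v₀ hz.2
      have hcard : κ z - κm G κ v₀ z ≤ (Am G v₀ z).card := by
        have h1 := hκ z
        have h2 : κm G κ v₀ z = min (κ z) (deg (Gm G v₀) z) := rfl
        omega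
      obtain ⟨t, ht1, ht2⟩ := Finset.exists_subset_card_eq hcard
      exact ⟨t, ht1, fun _ => ht2⟩
    · exact ⟨∅, Finset.empty_subset _, fun h => absurd h hz⟩
  choose T hTsub hTcard using hchoice
  -- facts about A
  have hA_adj : ∀ z y, y ∈ Am G v₀ z → G.Adj z y := by
    intro z y hy; rw [Am, Finset.mem_filter] at hy; exact hy.2.1
  have hA_NB : ∀ z y, y ∈ Am G v₀ z → y ∈ NB G v₀ := by
    intro z y hy; rw [Am, Finset.mem_filter] at hy; exact hy.2.2
  set Dd : Finset V := insert v₀ (D' \ NB G v₀) with hDd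
  set Pp : Finset V := Finset.univ \ Dd with hPp
  have hv₀NB : v₀ ∈ NB G v₀ := mem_NB.mpr (Or.inl rfl)
  have hadjNB : ∀ y, G.Adj v₀ y → y ∈ NB G v₀ := fun y h => mem_NB.mpr (Or.inr h)
  -- membership facts
  have hmemD : ∀ x, x ∈ Dd ↔ (x = v₀ ∨ (x ∈ D' ∧ x ∉ NB G v₀)) := by
    intro x; rw [hDd]; simp [Finset.mem_insert, Finset.mem_sdiff]
  have hNB_notD : ∀ y, y ∈ NB G v₀ → y ≠ v₀ → y ∉ Dd := by
    intro y hy hyne hc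
    rcases (hmemD y).1 hc with h | h
    · exact hyne h
    · exact h.2 hy
  -- the new graph H (kept opaque via an Adj-characterisation)
  obtain ⟨H, hHadj⟩ : ∃ H : SimpleGraph V, ∀ a b, H.Adj a b ↔
      (H'.Adj a b ∨ (a = v₀ ∧ G.Adj v₀ b) ∨ (b = v₀ ∧ G.Adj v₀ a) ∨
      ((a ∈ D' ∧ a ∉ NB G v₀) ∧ b ∈ T a) ∨ ((b ∈ D' ∧ b ∉ NB G v₀) ∧ a ∈ T b)) := by
    refine ⟨⟨fun a b => H'.Adj a b ∨ (a = v₀ ∧ G.Adj v₀ b) ∨ (b = v₀ ∧ G.Adj v₀ a) ∨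
      ((a ∈ D' ∧ a ∉ NB G v₀) ∧ b ∈ T a) ∨ ((b ∈ D' ∧ b ∉ NB G v₀) ∧ a ∈ T b), ?_, ?_⟩,
      fun a b => Iff.rfl⟩
    · constructor; intro a b h
      rcases h with h | h | h | h | h
      · exact Or.inl h.symm
      · exact Or.inr (Or.inr (Or.inl h))
      · exact Or.inr (Or.inl h)
      · exact Or.inr (Or.inr (Or.inr (Or.inr h)))
      · exact Or.inr (Or.inr (Or.inr (Or.inl h)))
    · constructor; intro a h
      rcases h with h | h | h | h | h
      · exact H'.loopless.irrefl a h
      · exact G.loopless.irrefl v₀ (h.1 ▸ h.2)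
      · exact G.loopless.irrefl v₀ (h.1 ▸ h.2)
      · exact h.1.2 (hA_NB _ _ (hTsub a h.2))
      · exact h.1.2 (hA_NB _ _ (hTsub a h.2))
  have hH'_not_NB : ∀ a b, H'.Adj a b → a ∉ NB G v₀ ∧ b ∉ NB G v₀ := by
    intro a b h
    have := hH1 h
    exact ⟨this.2.1, this.2.2⟩
  have hH'H : ∀ a b, H'.Adj a b → H.Adj a b := fun a b h => (hHadj a b).mpr (Or.inl h)
  -- H ≤ G
  have hHG : ∀ a b, H.Adj a b → G.Adj a b := by
    intro a b h
    rcases (hHadj a b).mp h with h | h | h | h | h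
    · exact (hH1 h).1
    · exact h.1 ▸ h.2
    · exact (h.1 ▸ h.2).symm
    · exact hA_adj _ _ (hTsub a h.2)
    · exact (hA_adj _ _ (hTsub b h.2)).symm
  refine ⟨Dd, Pp, H, ⟨le_of_adj_imp hHG, ?_, ?_, ?_, ?_, ?_⟩, ?_, ?_⟩
  · exact Finset.union_sdiff_of_subset (Finset.subset_univ _)
  · exact Finset.disjoint_sdiff
  · -- bipartite
    intro a b h0
    have h := (hHadj a b).mp h0
    have hve : ∀ y, G.Adj v₀ y → y ∈ Pp := by
      intro y hy
      rw [hPp, Finset.mem_sdiff]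
      exact ⟨Finset.mem_univ _, hNB_notD y (hadjNB y hy) (fun hc => G.loopless.irrefl v₀ (hc ▸ hy))⟩
    rcases h with h | h | h | h | h
    · have hnb := hH'_not_NB a b h
      rcases hH4 h with ⟨ha, hb⟩ | ⟨ha, hb⟩
      · refine Or.inl ⟨(hmemD a).2 (Or.inr ⟨ha, hnb.1⟩), ?_⟩
        rw [hPp, Finset.mem_sdiff]
        refine ⟨Finset.mem_univ _, fun hc => ?_⟩
        rcases (hmemD b).1 hc with h' | h'
        · exact hnb.2 (h' ▸ hv₀NB)
        · exact (Finset.disjoint_left.mp hH3) h'.1 hb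
      · refine Or.inr ⟨?_, (hmemD b).2 (Or.inr ⟨hb, hnb.2⟩)⟩
        rw [hPp, Finset.mem_sdiff]
        refine ⟨Finset.mem_univ _, fun hc => ?_⟩
        rcases (hmemD a).1 hc with h' | h'
        · exact hnb.1 (h' ▸ hv₀NB)
        · exact (Finset.disjoint_left.mp hH3) h'.1 ha
    · exact Or.inl ⟨(hmemD a).2 (Or.inl h.1), hve b h.2⟩
    · exact Or.inr ⟨hve a h.2, (hmemD b).2 (Or.inl h.1)⟩
    · refine Or.inl ⟨(hmemD a).2 (Or.inr h.1), ?_⟩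
      have hbNB := hA_NB _ _ (hTsub a h.2)
      have hbv : b ≠ v₀ := by
        intro hc
        have hadj := hA_adj _ _ (hTsub a h.2)
        rw [hc] at hadj
        exact h.1.2 (mem_NB.mpr (Or.inr hadj.symm))
      rw [hPp, Finset.mem_sdiff]
      exact ⟨Finset.mem_univ _, hNB_notD b hbNB hbv⟩
    · refine Or.inr ⟨?_, (hmemD b).2 (Or.inr h.1)⟩
      have haNB := hA_NB _ _ (hTsub b h.2)
      have hav : a ≠ v₀ := by
        intro hc
        have hadj := hA_adj _ _ (hTsub b h.2)
        rw [hc] at hadj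
        exact h.1.2 (mem_NB.mpr (Or.inr hadj.symm))
      rw [hPp, Finset.mem_sdiff]
      exact ⟨Finset.mem_univ _, hNB_notD a haNB hav⟩
  · -- coverage
    intro p hp hpC
    have hpD : p ∉ Dd := (Finset.mem_sdiff.mp hp).2
    by_cases hpNB : p ∈ NB G v₀
    · have hpv : p ≠ v₀ := by
        intro hc
        exact hpD (hc ▸ (hmemD v₀).2 (Or.inl rfl))
      rcases mem_NB.mp hpNB with h | h
      · exact absurd h hpv
      · exact deg_pos_of_adj ((hHadj p v₀).mpr (Or.inr (Or.inr (Or.inl ⟨rfl, h⟩))))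
    · have hpD' : p ∉ D' := fun hc => hpD ((hmemD p).2 (Or.inr ⟨hc, hpNB⟩))
      have hpP' : p ∈ P' := by
        have : p ∈ D' ∪ P' := hH2 ▸ Finset.mem_univ p
        rcases Finset.mem_union.mp this with h | h
        · exact absurd h hpD'
        · exact h
      have hpC' : p ∉ C ∪ NB G v₀ := by
        rw [Finset.mem_union]
        rintro (h | h)
        · exact hpC h
        · exact hpNB h
      have := hH5 p hpP' hpC'
      obtain ⟨y, hy⟩ := Finset.card_pos.mp this
      rw [Finset.mem_filter] at hy
      exact deg_pos_of_adj (hH'H _ _ hy.2)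
  · -- degrees
    intro x hx
    rcases (hmemD x).1 hx with hxv | hxD
    · -- x = v₀
      have hdg : deg H v₀ = deg G v₀ := by
        unfold deg
        congr 1
        apply Finset.Subset.antisymm
        · intro y hy
          have h := (hHadj v₀ y).mp (Finset.mem_filter.mp hy).2
          refine Finset.mem_filter.mpr ⟨Finset.mem_univ _, ?_⟩
          rcases h with h | h | h | h | h
          · exact absurd hv₀NB (hH'_not_NB _ _ h).1
          · exact h.2
          · exact absurd h.2 (G.loopless.irrefl v₀)
          · exact absurd hv₀NB h.1.2
          · exact absurd (mem_NB.mpr (Or.inr (hA_adj _ _ (hTsub y h.2)).symm)) h.1.2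
        · intro y hy
          have h : G.Adj v₀ y := (Finset.mem_filter.mp hy).2
          exact Finset.mem_filter.mpr ⟨Finset.mem_univ _,
            (hHadj v₀ y).mpr (Or.inr (Or.inl ⟨rfl, h⟩))⟩
      rw [hxv, hdg, hv, min_self]
    · -- x ∈ D', x ∉ NB
      have hdisj : Disjoint (Finset.univ.filter fun y => H'.Adj x y) (T x) := by
        rw [Finset.disjoint_left]
        intro y hy hyT
        rw [Finset.mem_filter] at hy
        exact (hH'_not_NB _ _ hy.2).2 (hA_NB _ _ (hTsub x hyT))
      have hdg : deg H x = ((Finset.univ.filter fun y => H'.Adj x y) ∪ T x).card := by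
        unfold deg
        congr 1
        apply Finset.Subset.antisymm
        · intro y hy
          have h := (hHadj x y).mp (Finset.mem_filter.mp hy).2
          rw [Finset.mem_union]
          rcases h with h | h | h | h | h
          · exact Or.inl (Finset.mem_filter.mpr ⟨Finset.mem_univ _, h⟩)
          · exact absurd (h.1 ▸ hv₀NB) hxD.2
          · exact absurd (mem_NB.mpr (Or.inr h.2)) hxD.2
          · exact Or.inr h.2
          · exact absurd (hA_NB _ _ (hTsub y h.2)) hxD.2
        · intro y hy
          rw [Finset.mem_union] at hy
          refine Finset.mem_filter.mpr ⟨Finset.mem_univ _, ?_⟩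
          rcases hy with h | h
          · exact (hHadj x y).mpr (Or.inl (Finset.mem_filter.mp h).2)
          · exact (hHadj x y).mpr (Or.inr (Or.inr (Or.inr (Or.inl ⟨hxD, h⟩))))
      have hcount : deg H x = deg H' x + (T x).card := by
        rw [hdg, Finset.card_union_of_disjoint hdisj]
        rfl
      have e1 : deg H' x = min (deg (Gm G v₀) x) (κm G κ v₀ x) := hH6 x hxD.1
      have e2 : κm G κ v₀ x = min (κ x) (deg (Gm G v₀) x) := rfl
      have e3 : (T x).card = κ x - κm G κ v₀ x := hTcard x hxD
      have e4 : κ x ≤ deg G x := hκ x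
      omega
  · exact (hmemD v₀).2 (Or.inl rfl)
  · intro y hy
    exact hNB_notD y (hadjNB y hy) (fun hc => G.loopless.irrefl v₀ (hc ▸ hy))

/-! ### Existence of DP-Nash subgraphs -/

lemma Gm_hedge (G : SimpleGraph V) (κ : V → ℕ) (v₀ : V) (C : Finset V)
    (hedgeC : ∀ u v, G.Adj u v → 0 < κ u ∨ 0 < κ v ∨ u ∈ C ∨ v ∈ C) :
    ∀ u v, (Gm G v₀).Adj u v → 0 < κm G κ v₀ u ∨ 0 < κm G κ v₀ v ∨
      u ∈ C ∪ NB G v₀ ∨ v ∈ C ∪ NB G v₀ := by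
  intro u v h
  rcases hedgeC u v h.1 with hc | hc | hc | hc
  · exact Or.inl (lt_min hc (deg_pos_of_adj h))
  · exact Or.inr (Or.inl (lt_min hc (deg_pos_of_adj h.symm)))
  · exact Or.inr (Or.inr (Or.inl (Finset.mem_union_left _ hc)))
  · exact Or.inr (Or.inr (Or.inr (Finset.mem_union_left _ hc)))

lemma κm_le (G : SimpleGraph V) (κ : V → ℕ) (v₀ : V) :
    ∀ x, κm G κ v₀ x ≤ deg (Gm G v₀) x := fun _ => min_le_right _ _

lemma dpndpnEX_base (G : SimpleGraph V) (κ : V → ℕ) (C : Finset V)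
    (h : ∀ a b, ¬ G.Adj a b) : ∃ D P H, IsDPNashC G κ C D P H := by
  refine ⟨Finset.univ, ∅, ⊥, bot_le, Finset.union_empty _, Finset.disjoint_empty_right _,
    ?_, ?_, ?_⟩
  · intro u v hadj
    simp at hadj
  · intro v hv
    simp at hv
  · intro x _
    have h1 : deg (⊥ : SimpleGraph V) x = 0 := by
      simp [deg]
    have h2 : deg G x = 0 := by
      unfold deg
      rw [Finset.card_eq_zero, Finset.eq_empty_iff_forall_notMem]
      intro y hy
      exact h x y (Finset.mem_filter.mp hy).2
    rw [h1, h2]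
    simp

lemma dpnEX : ∀ (n : ℕ) (G : SimpleGraph V) (κ : V → ℕ) (C : Finset V), dpnM G ≤ n →
    (∀ x, κ x ≤ deg G x) →
    (∀ u v, G.Adj u v → 0 < κ u ∨ 0 < κ v ∨ u ∈ C ∨ v ∈ C) →
    ∃ D P H, IsDPNashC G κ C D P H := by
  intro n
  induction n with
  | zero =>
    intro G κ C hM hκ hedgeC
    apply dpndpnEX_base
    intro a b hab
    have : (a, b) ∈ Finset.univ.filter fun p : V × V => G.Adj p.1 p.2 :=
      Finset.mem_filter.mpr ⟨Finset.mem_univ _, hab⟩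
    have := Finset.card_pos.mpr ⟨(a,b), this⟩
    unfold dpnM at hM
    omega
  | succ n ih =>
    intro G κ C hM hκ hedgeC
    by_cases h1 : ∃ v₀, 0 < deg G v₀ ∧ κ v₀ = deg G v₀
    · obtain ⟨v₀, hd, hv⟩ := h1
      obtain ⟨y, hy⟩ := Finset.card_pos.mp hd
      have hadj : G.Adj v₀ y := (Finset.mem_filter.mp hy).2
      have hlt : dpnM (Gm G v₀) < dpnM G :=
        dpnM_lt (Gm_le G v₀) hadj (fun hc => hc.2.1 (mem_NB.mpr (Or.inl rfl)))
      obtain ⟨D, P, H, hDP⟩ := dpnMassage G κ v₀ C hκ hv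
        (ih (Gm G v₀) (κm G κ v₀) (C ∪ NB G v₀) (by omega) (κm_le G κ v₀)
          (Gm_hedge G κ v₀ C hedgeC))
      exact ⟨D, P, H, hDP.1⟩
    · by_cases h2 : ∃ a b, G.Adj a b
      · obtain ⟨a, b, hab⟩ := h2
        have hane : a ≠ b := G.ne_of_adj hab
        have hka : κ a < deg G a :=
          lt_of_le_of_ne (hκ a) (fun hc => h1 ⟨a, deg_pos_of_adj hab, hc⟩)
        have hkb : κ b < deg G b :=
          lt_of_le_of_ne (hκ b) (fun hc => h1 ⟨b, deg_pos_of_adj hab.symm, hc⟩)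
        obtain ⟨G', hG'⟩ : ∃ G' : SimpleGraph V, ∀ x y, G'.Adj x y ↔
            (G.Adj x y ∧ ¬(x = a ∧ y = b) ∧ ¬(x = b ∧ y = a)) := by
          refine ⟨⟨fun x y => G.Adj x y ∧ ¬(x = a ∧ y = b) ∧ ¬(x = b ∧ y = a), ?_, ?_⟩,
            fun x y => Iff.rfl⟩
          · constructor; intro x y h
            exact ⟨h.1.symm, fun hc => h.2.2 ⟨hc.2, hc.1⟩, fun hc => h.2.1 ⟨hc.2, hc.1⟩⟩
          · constructor; intro x h
            exact G.loopless.irrefl x h.1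
        have hle : ∀ x y, G'.Adj x y → G.Adj x y := fun x y h => ((hG' x y).mp h).1
        have hκ' : ∀ z, κ z ≤ deg G' z := by
          intro z
          by_cases hza : z = a
          · subst hza
            have hsub : (Finset.univ.filter fun y => G.Adj z y) ⊆
                insert b (Finset.univ.filter fun y => G'.Adj z y) := by
              intro y hy
              have hadjy : G.Adj z y := (Finset.mem_filter.mp hy).2
              by_cases hyb : y = b
              · exact Finset.mem_insert.mpr (Or.inl hyb)
              · refine Finset.mem_insert.mpr (Or.inr (Finset.mem_filter.mpr
                  ⟨Finset.mem_univ _, (hG' z y).mpr ⟨hadjy, fun hc => hyb hc.2, fun hc => hane hc.1⟩⟩))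
            have := Finset.card_le_card hsub
            have hins := Finset.card_insert_le b (Finset.univ.filter fun y => G'.Adj z y)
            unfold deg at hka ⊢
            omega
          · by_cases hzb : z = b
            · subst hzb
              have hsub : (Finset.univ.filter fun y => G.Adj z y) ⊆
                  insert a (Finset.univ.filter fun y => G'.Adj z y) := by
                intro y hy
                have hadjy : G.Adj z y := (Finset.mem_filter.mp hy).2
                by_cases hya : y = a
                · exact Finset.mem_insert.mpr (Or.inl hya)
                · refine Finset.mem_insert.mpr (Or.inr (Finset.mem_filter.mpr
                    ⟨Finset.mem_univ _, (hG' z y).mpr ⟨hadjy, fun hc => hane hc.1.symm, fun hc => hya hc.2⟩⟩))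
              have := Finset.card_le_card hsub
              have hins := Finset.card_insert_le a (Finset.univ.filter fun y => G'.Adj z y)
              unfold deg at hkb ⊢
              omega
            · have hsub : (Finset.univ.filter fun y => G.Adj z y) ⊆
                  (Finset.univ.filter fun y => G'.Adj z y) := by
                intro y hy
                have hadjy : G.Adj z y := (Finset.mem_filter.mp hy).2
                exact Finset.mem_filter.mpr ⟨Finset.mem_univ _,
                  (hG' z y).mpr ⟨hadjy, fun hc => hza hc.1, fun hc => hzb hc.1⟩⟩
              have := Finset.card_le_card hsub
              have := hκ z
              unfold deg at *
              omega
        have hlt : dpnM G' < dpnM G := dpnM_lt hle hab (fun hc => ((hG' a b).mp hc).2.1 ⟨rfl, rfl⟩)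
        obtain ⟨D, P, H, hDP⟩ := ih G' κ C (by omega) hκ'
          (fun u v h => hedgeC u v (hle u v h))
        exact ⟨D, P, H, dpnTransfer hle hκ' hDP⟩
      · push_neg at h2
        exact dpndpnEX_base G κ C h2

lemma dpnSTAR (G : SimpleGraph V) (κ : V → ℕ) (C : Finset V) (v₀ : V)
    (hκ : ∀ x, κ x ≤ deg G x)
    (hedgeC : ∀ u v, G.Adj u v → 0 < κ u ∨ 0 < κ v ∨ u ∈ C ∨ v ∈ C)
    (hv : κ v₀ = deg G v₀) :
    ∃ D P H, IsDPNashC G κ C D P H ∧ v₀ ∈ D ∧ ∀ y, G.Adj v₀ y → y ∉ D :=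
  dpnMassage G κ v₀ C hκ hv
    (dpnEX (dpnM (Gm G v₀)) (Gm G v₀) (κm G κ v₀) (C ∪ NB G v₀) le_rfl (κm_le G κ v₀)
      (Gm_hedge G κ v₀ C hedgeC))

/-! ### X/Y/Z helpers -/

lemma mem_XX_iff {G : SimpleGraph V} {κ : V → ℕ} {x : V} :
    x ∈ XX G κ ↔ κ x = deg G x := by simp [XX]

lemma ZZ_no_X_nbr {G : SimpleGraph V} {κ : V → ℕ} {z y : V}
    (hz : z ∈ ZZ G κ) (hadj : G.Adj z y) : y ∉ XX G κ := by
  intro hy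
  have hz' := Finset.mem_sdiff.mp hz
  by_cases hzx : z ∈ XX G κ
  · exact hz'.2 (Finset.mem_union_left _ hzx)
  · refine hz'.2 (Finset.mem_union_right _ ?_)
    exact Finset.mem_filter.mpr ⟨Finset.mem_univ _, hzx, y, hy, hadj.symm⟩

lemma toIsDPNash {G : SimpleGraph V} {κ : V → ℕ} {D P : Finset V} {H : SimpleGraph V}
    (h : IsDPNashC G κ ∅ D P H) : IsDPNash G κ D P H := by
  obtain ⟨a1, a2, a3, a4, a5, a6⟩ := h
  exact ⟨a1, a2, a3, a4, fun w hw => a5 w hw (Finset.notMem_empty w), a6⟩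

lemma dpnTRIM (G : SimpleGraph V) (κ : V → ℕ) (hκ : ∀ x, κ x ≤ deg G x)
    (hedge : ∀ u v, G.Adj u v → 0 < κ u ∨ 0 < κ v) {u v : V}
    (hadj : G.Adj u v) (hu : u ∈ XX G κ ∪ ZZ G κ) (hκu : 0 < κ u) :
    ∃ D P H, IsDPNashC G κ ∅ D P H ∧ u ∈ D ∧ v ∈ P := by
  have hvne : v ≠ u := (G.ne_of_adj hadj).symm
  have hvmem : v ∈ Finset.univ.filter fun y => G.Adj u y :=
    Finset.mem_filter.mpr ⟨Finset.mem_univ _, hadj⟩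
  have hcard : κ u - 1 ≤ ((Finset.univ.filter fun y => G.Adj u y).erase v).card := by
    rw [Finset.card_erase_of_mem hvmem]
    have := hκ u
    unfold deg at this
    omega
  obtain ⟨K₀, hK₀sub, hK₀card⟩ := Finset.exists_subset_card_eq hcard
  set K : Finset V := insert v K₀ with hK
  have hvK₀ : v ∉ K₀ := fun hc => (Finset.mem_erase.mp (hK₀sub hc)).1 rfl
  have hKcard : K.card = κ u := by
    rw [hK, Finset.card_insert_of_notMem hvK₀, hK₀card]
    omega
  have hKadj : ∀ y ∈ K, G.Adj u y := by
    intro y hy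
    rcases Finset.mem_insert.mp hy with rfl | hy'
    · exact hadj
    · exact (Finset.mem_filter.mp (Finset.mem_of_mem_erase (hK₀sub hy'))).2
  obtain ⟨G₁, hG₁⟩ : ∃ G₁ : SimpleGraph V, ∀ x y, G₁.Adj x y ↔
      (G.Adj x y ∧ (x = u → y ∈ K) ∧ (y = u → x ∈ K)) := by
    refine ⟨⟨fun x y => G.Adj x y ∧ (x = u → y ∈ K) ∧ (y = u → x ∈ K), ?_, ?_⟩,
      fun x y => Iff.rfl⟩
    · constructor; intro x y h
      exact ⟨h.1.symm, h.2.2, h.2.1⟩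
    · constructor; intro x h
      exact G.loopless.irrefl x h.1
  have hle : ∀ x y, G₁.Adj x y → G.Adj x y := fun x y h => ((hG₁ x y).mp h).1
  have hKne : ∀ y ∈ K, y ≠ u := fun y hy hc => G.loopless.irrefl u (hc ▸ hKadj y hy)
  have hfilu : (Finset.univ.filter fun y => G₁.Adj u y) = K := by
    apply Finset.Subset.antisymm
    · intro y hy
      exact (((hG₁ u y).mp (Finset.mem_filter.mp hy).2).2.1) rfl
    · intro y hy
      exact Finset.mem_filter.mpr ⟨Finset.mem_univ _, (hG₁ u y).mpr
        ⟨hKadj y hy, fun _ => hy, fun hc => absurd hc (hKne y hy)⟩⟩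
  have hdeg_u : deg G₁ u = κ u := by
    unfold deg
    rw [hfilu, hKcard]
  have hκ₁ : ∀ z, κ z ≤ deg G₁ z := by
    intro z
    by_cases hz : z = u
    · subst hz
      rw [hdeg_u]
    · by_cases hzz : z ∈ K ∨ ¬ G.Adj u z
      · have hsub : (Finset.univ.filter fun y => G.Adj z y) ⊆
            (Finset.univ.filter fun y => G₁.Adj z y) := by
          intro y hy
          have hadjy : G.Adj z y := (Finset.mem_filter.mp hy).2
          refine Finset.mem_filter.mpr ⟨Finset.mem_univ _, (hG₁ z y).mpr
            ⟨hadjy, fun hc => absurd hc hz, fun hc => ?_⟩⟩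
          rcases hzz with h' | h'
          · exact h'
          · exact absurd (hc ▸ hadjy).symm h'
        have := Finset.card_le_card hsub
        have := hκ z
        unfold deg at *
        omega
      · push_neg at hzz
        obtain ⟨hzK, hzadj⟩ := hzz
        have hzX : κ z < deg G z := by
          rcases Finset.mem_union.mp hu with huX | huZ
          · exfalso
            have hKall : K = Finset.univ.filter fun y => G.Adj u y := by
              apply Finset.eq_of_subset_of_card_le
              · intro y hy
                exact Finset.mem_filter.mpr ⟨Finset.mem_univ _, hKadj y hy⟩
              · have : κ u = deg G u := mem_XX_iff.mp huX
                unfold deg at this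
                rw [hKcard]
                omega
            apply hzK
            rw [hKall]
            exact Finset.mem_filter.mpr ⟨Finset.mem_univ _, hzadj⟩
          · have : z ∉ XX G κ := ZZ_no_X_nbr huZ hzadj
            have hne : κ z ≠ deg G z := fun hc => this (mem_XX_iff.mpr hc)
            exact lt_of_le_of_ne (hκ z) hne
        have humem : u ∈ Finset.univ.filter fun y => G.Adj z y :=
          Finset.mem_filter.mpr ⟨Finset.mem_univ _, hzadj.symm⟩
        have hsub : (Finset.univ.filter fun y => G.Adj z y).erase u ⊆
            (Finset.univ.filter fun y => G₁.Adj z y) := by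
          intro y hy
          obtain ⟨hyne, hy'⟩ := Finset.mem_erase.mp hy
          have hadjy : G.Adj z y := (Finset.mem_filter.mp hy').2
          exact Finset.mem_filter.mpr ⟨Finset.mem_univ _, (hG₁ z y).mpr
            ⟨hadjy, fun hc => absurd hc hz, fun hc => absurd hc hyne⟩⟩
        have h1 := Finset.card_le_card hsub
        rw [Finset.card_erase_of_mem humem] at h1
        unfold deg at *
        omega
  have hedge₁ : ∀ x y, G₁.Adj x y → 0 < κ x ∨ 0 < κ y ∨ x ∈ (∅ : Finset V) ∨
      y ∈ (∅ : Finset V) := by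
    intro x y h
    rcases hedge x y (hle x y h) with h' | h'
    · exact Or.inl h'
    · exact Or.inr (Or.inl h')
  obtain ⟨D, P, H, hDP, huD, hnb⟩ := dpnSTAR G₁ κ ∅ u hκ₁ hedge₁ hdeg_u.symm
  have hG₁uv : G₁.Adj u v := (hG₁ u v).mpr
    ⟨hadj, fun _ => Finset.mem_insert_self _ _, fun hc => absurd hc hvne⟩
  have hvD : v ∉ D := hnb v hG₁uv
  have hvP : v ∈ P := by
    have : v ∈ D ∪ P := hDP.2.1 ▸ Finset.mem_univ v
    rcases Finset.mem_union.mp this with h' | h'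
    · exact absurd h' hvD
    · exact h'
  exact ⟨D, P, H, dpnTransfer hle hκ₁ hDP, huD, hvP⟩

lemma dpnISO (G : SimpleGraph V) (κ : V → ℕ) (hκ : ∀ x, κ x ≤ deg G x)
    (hedge : ∀ u v, G.Adj u v → 0 < κ u ∨ 0 < κ v) {v : V}
    (hκv : κ v = 0) (hnbr : ∀ y, G.Adj v y → κ y < deg G y) :
    ∃ D P H, IsDPNashC G κ ∅ D P H ∧ v ∈ D := by
  obtain ⟨G₂, hG₂⟩ : ∃ G₂ : SimpleGraph V, ∀ x y, G₂.Adj x y ↔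
      (G.Adj x y ∧ x ≠ v ∧ y ≠ v) := by
    refine ⟨⟨fun x y => G.Adj x y ∧ x ≠ v ∧ y ≠ v, ?_, ?_⟩, fun x y => Iff.rfl⟩
    · constructor; intro x y h
      exact ⟨h.1.symm, h.2.2, h.2.1⟩
    · constructor; intro x h
      exact G.loopless.irrefl x h.1
  have hle : ∀ x y, G₂.Adj x y → G.Adj x y := fun x y h => ((hG₂ x y).mp h).1
  have hκ₂ : ∀ z, κ z ≤ deg G₂ z := by
    intro z
    by_cases hz : z = v
    · subst hz
      rw [hκv]
      omega
    · by_cases hzv : G.Adj z v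
      · have hlt : κ z < deg G z := hnbr z hzv.symm
        have hvmem : v ∈ Finset.univ.filter fun y => G.Adj z y :=
          Finset.mem_filter.mpr ⟨Finset.mem_univ _, hzv⟩
        have hsub : (Finset.univ.filter fun y => G.Adj z y).erase v ⊆
            (Finset.univ.filter fun y => G₂.Adj z y) := by
          intro y hy
          obtain ⟨hyne, hy'⟩ := Finset.mem_erase.mp hy
          exact Finset.mem_filter.mpr ⟨Finset.mem_univ _, (hG₂ z y).mpr
            ⟨(Finset.mem_filter.mp hy').2, hz, hyne⟩⟩
        have h1 := Finset.card_le_card hsub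
        rw [Finset.card_erase_of_mem hvmem] at h1
        unfold deg at *
        omega
      · have hsub : (Finset.univ.filter fun y => G.Adj z y) ⊆
            (Finset.univ.filter fun y => G₂.Adj z y) := by
          intro y hy
          have hadjy : G.Adj z y := (Finset.mem_filter.mp hy).2
          refine Finset.mem_filter.mpr ⟨Finset.mem_univ _, (hG₂ z y).mpr
            ⟨hadjy, hz, fun hc => hzv (hc ▸ hadjy)⟩⟩
        have := Finset.card_le_card hsub
        have := hκ z
        unfold deg at *
        omega
  have hedge₂ : ∀ x y, G₂.Adj x y → 0 < κ x ∨ 0 < κ y ∨ x ∈ (∅ : Finset V) ∨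
      y ∈ (∅ : Finset V) := by
    intro x y h
    rcases hedge x y (hle x y h) with h' | h'
    · exact Or.inl h'
    · exact Or.inr (Or.inl h')
  obtain ⟨D, P, H, hDP⟩ := dpnEX (dpnM G₂) G₂ κ ∅ le_rfl hκ₂ hedge₂
  have hvD : v ∈ D := by
    have hmem : v ∈ D ∪ P := hDP.2.1 ▸ Finset.mem_univ v
    rcases Finset.mem_union.mp hmem with h' | h'
    · exact h'
    · exfalso
      have hpos := hDP.2.2.2.2.1 v h' (Finset.notMem_empty v)
      have hdeg : deg H v ≤ deg G₂ v := deg_le_of_le (fun a b h => hDP.1 h) v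
      have : deg G₂ v = 0 := by
        unfold deg
        rw [Finset.card_eq_zero, Finset.eq_empty_iff_forall_notMem]
        intro y hy
        exact ((hG₂ v y).mp (Finset.mem_filter.mp hy).2).2.1 rfl
      omega
  exact ⟨D, P, H, dpnTransfer hle hκ₂ hDP, hvD⟩

lemma dpnMAIN (G : SimpleGraph V) (κ : V → ℕ) (hκ : ∀ x, κ x ≤ deg G x)
    (hedge : ∀ u v, G.Adj u v → 0 < κ u ∨ 0 < κ v) {u v : V}
    (hadj : G.Adj u v) (hu : u ∈ XX G κ ∪ ZZ G κ) (hv : v ∈ XX G κ ∪ ZZ G κ)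
    (hκu : 0 < κ u) :
    ∃ (D₁ P₁ : Finset V) (H₁ : SimpleGraph V) (D₂ P₂ : Finset V) (H₂ : SimpleGraph V),
      IsDPNashC G κ ∅ D₁ P₁ H₁ ∧ IsDPNashC G κ ∅ D₂ P₂ H₂ ∧ D₁ ≠ D₂ := by
  obtain ⟨D₁, P₁, H₁, hDP₁, huD₁, hvP₁⟩ := dpnTRIM G κ hκ hedge hadj hu hκu
  have hvD₁ : v ∉ D₁ := Finset.disjoint_right.mp hDP₁.2.2.1 hvP₁
  by_cases hkv : 0 < κ v
  · obtain ⟨D₂, P₂, H₂, hDP₂, hvD₂, _⟩ := dpnTRIM G κ hκ hedge hadj.symm hv hkv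
    exact ⟨D₁, P₁, H₁, D₂, P₂, H₂, hDP₁, hDP₂, fun hc => hvD₁ (hc ▸ hvD₂)⟩
  · have hκv : κ v = 0 := by omega
    have hvZ : v ∈ ZZ G κ := by
      rcases Finset.mem_union.mp hv with h' | h'
      · exfalso
        have := mem_XX_iff.mp h'
        have := deg_pos_of_adj hadj.symm
        omega
      · exact h'
    have hnbr : ∀ y, G.Adj v y → κ y < deg G y := by
      intro y hy
      have : y ∉ XX G κ := ZZ_no_X_nbr hvZ hy
      exact lt_of_le_of_ne (hκ y) (fun hc => this (mem_XX_iff.mpr hc))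
    obtain ⟨D₂, P₂, H₂, hDP₂, hvD₂⟩ := dpnISO G κ hκ hedge hκv hnbr
    exact ⟨D₁, P₁, H₁, D₂, P₂, H₂, hDP₁, hDP₂, fun hc => hvD₁ (hc ▸ hvD₂)⟩


/-- If `X ∪ Z` is not independent then there are two DP-Nash subgraphs
with distinct `D`-sets. -/
theorem stmt4 (G : SimpleGraph V) (κ : V → ℕ) (hκ : ∀ v, κ v ≤ deg G v)
    (hedge : ∀ u v, G.Adj u v → 0 < κ u ∨ 0 < κ v)
    (hnind : ∃ u ∈ XX G κ ∪ ZZ G κ, ∃ v ∈ XX G κ ∪ ZZ G κ, G.Adj u v) :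
    ∃ (D₁ P₁ : Finset V) (H₁ : SimpleGraph V) (D₂ P₂ : Finset V) (H₂ : SimpleGraph V),
      IsDPNash G κ D₁ P₁ H₁ ∧ IsDPNash G κ D₂ P₂ H₂ ∧ D₁ ≠ D₂ := by
  obtain ⟨u, hu, v, hv, hadj⟩ := hnind
  have main : ∃ (D₁ P₁ : Finset V) (H₁ : SimpleGraph V) (D₂ P₂ : Finset V)
      (H₂ : SimpleGraph V), IsDPNashC G κ ∅ D₁ P₁ H₁ ∧ IsDPNashC G κ ∅ D₂ P₂ H₂ ∧ D₁ ≠ D₂ := by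
    rcases hedge u v hadj with h | h
    · exact dpnMAIN G κ hκ hedge hadj hu hv h
    · exact dpnMAIN G κ hκ hedge hadj.symm hv hu h
  obtain ⟨D₁, P₁, H₁, D₂, P₂, H₂, h1, h2, hne⟩ := main
  exact ⟨D₁, P₁, H₁, D₂, P₂, H₂, toIsDPNash h1, toIsDPNash h2, hne⟩
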